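/- For the even cycle C_{2n} (n ≥ 2), the least b such that χ_ℓ(C_{2n} □ K_{1,b}) = χ_ℓ(C_{2n}) + 1 equals 1; in particular f_1(C_{2n}) = 1 while P_ℓ(C_{2n}, 2) = 2. -/

import Mathlib

open SimpleGraph

/-- A proper coloring of `G` from the list assignment `L`. -/
def IsProperListColoring {V : Type*} (G : SimpleGraph V) (L : V → Finset ℕ) (f : V → ℕ) : Prop :=
  (∀ v, f v ∈ L v) ∧ ∀ ⦃v w⦄, G.Adj v w → f v ≠ f w

/-- `G` is `k`-choosable: every `k`-assignment admits a proper coloring. -/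
def Choosable {V : Type*} (G : SimpleGraph V) (k : ℕ) : Prop :=
  ∀ L : V → Finset ℕ, (∀ v, (L v).card = k) → ∃ f, IsProperListColoring G L f

/-- The list chromatic number: the least `k` such that `G` is `k`-choosable. -/
noncomputable def listChromaticNumber {V : Type*} (G : SimpleGraph V) : ℕ :=
  sInf {k | Choosable G k}

/-- The list color function `P_ℓ(G,k)`: the minimum number of proper `L`-colorings
over all `k`-assignments `L`. -/
noncomputable def listColorFunction {V : Type*} (G : SimpleGraph V) (k : ℕ) : ℕ :=
  sInf {n | ∃ L : V → Finset ℕ, (∀ v, (L v).card = k) ∧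
    n = Nat.card {f : V → ℕ // IsProperListColoring G L f}}

/-- `G` is strong `k`-chromatic-choosable: `χ(G) = k` and every `(k-1)`-assignment
admitting no proper coloring is constant. -/
def StrongChromChoosable {V : Type*} (G : SimpleGraph V) (k : ℕ) : Prop :=
  G.chromaticNumber = k ∧
  ∀ L : V → Finset ℕ, (∀ v, (L v).card = k - 1) →
    (¬ ∃ f, IsProperListColoring G L f) → ∀ v w, L v = L w


open Finset

lemma sInf_set_eq {S : Set ℕ} {a : ℕ} (ha : a ∈ S) (hlb : ∀ b ∈ S, a ≤ b) : sInf S = a :=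
  le_antisymm (csInf_le (OrderBot.bddBelow S) ha) (le_csInf ⟨a, ha⟩ hlb)

def pick (s : Finset ℕ) (x : ℕ) : ℕ :=
  if h : (s.erase x).Nonempty then (s.erase x).min' h else 0

lemma pick_spec {s : Finset ℕ} (h : 2 ≤ s.card) (x : ℕ) : pick s x ∈ s ∧ pick s x ≠ x := by
  have hne : (s.erase x).Nonempty := by
    rw [← Finset.card_pos]
    have := Finset.pred_card_le_card_erase (s := s) (a := x)
    omega
  have hmem : pick s x ∈ s.erase x := by
    rw [pick, dif_pos hne]; exact Finset.min'_mem _ hne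
  rw [Finset.mem_erase] at hmem
  exact ⟨hmem.2, hmem.1⟩

lemma fin_add_one_val {k : ℕ} (i : Fin (k+2)) : (i+1).val = (i.val + 1) % (k+2) := by
  rw [Fin.add_def, Fin.val_one]

lemma cycle_adj_iff {k : ℕ} {u v : Fin (k+2)} :
    (cycleGraph (k+2)).Adj u v ↔ u = v + 1 ∨ v = u + 1 := by
  rw [cycleGraph_adj]
  constructor
  · rintro (h | h)
    · exact Or.inl ((sub_eq_iff_eq_add.mp h).trans (add_comm 1 v))
    · exact Or.inr ((sub_eq_iff_eq_add.mp h).trans (add_comm 1 u))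
  · rintro (h | h)
    · left; rw [h]; (open Fin.CommRing in ring)
    · right; rw [h]; (open Fin.CommRing in ring)

lemma cycle_adj_succ {k : ℕ} (i : Fin (k+2)) : (cycleGraph (k+2)).Adj i (i+1) :=
  cycle_adj_iff.mpr (Or.inr rfl)

lemma proper_of_succ {k : ℕ} {f : Fin (k+2) → ℕ} (h : ∀ i, f i ≠ f (i+1)) :
    ∀ ⦃u v⦄, (cycleGraph (k+2)).Adj u v → f u ≠ f v := by
  intro u v hadj
  rcases cycle_adj_iff.mp hadj with h1 | h1
  · subst h1; exact (h v).symm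
  · subst h1; exact h u

def gr (L : ℕ → Finset ℕ) (c : ℕ) : ℕ → ℕ
  | 0 => c
  | t+1 => pick (L (t+1)) (gr L c t)

lemma exists_coloring_start {k : ℕ} (L : Fin (k+2) → Finset ℕ)
    (hL : ∀ i, 2 ≤ (L i).card) (c : ℕ) (hc : c ∈ L 0) (hlast : c ∉ L (Fin.last (k+1))) :
    ∃ f : Fin (k+2) → ℕ, (∀ i, f i ∈ L i) ∧ (∀ i, f i ≠ f (i+1)) ∧ f 0 = c := by
  set L' : ℕ → Finset ℕ := fun t => L ⟨t % (k+2), Nat.mod_lt _ (by omega)⟩ with hL'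
  set F : ℕ → ℕ := gr L' c with hF
  have hmem : ∀ t (h : t < k+2), F t ∈ L ⟨t, h⟩ := by
    intro t h
    induction t with
    | zero => exact hc
    | succ s ih =>
      have hLeq : L' (s+1) = L ⟨s+1, h⟩ :=
        congrArg L (Fin.mk_eq_mk.mpr (Nat.mod_eq_of_lt h))
      have hgr : F (s+1) = pick (L' (s+1)) (F s) := rfl
      rw [hgr, hLeq]
      exact (pick_spec (hL _) (F s)).1
  have hne : ∀ t, t + 1 < k+2 → F (t+1) ≠ F t := by
    intro t h
    have hLeq : L' (t+1) = L ⟨t+1, h⟩ :=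
      congrArg L (Fin.mk_eq_mk.mpr (Nat.mod_eq_of_lt h))
    have hgr : F (t+1) = pick (L' (t+1)) (F t) := rfl
    rw [hgr, hLeq]
    exact (pick_spec (hL _) (F t)).2
  refine ⟨fun i => F i.val, ?_, ?_, rfl⟩
  · intro i
    have := hmem i.val i.isLt
    rwa [Fin.eta] at this
  · intro i
    show F i.val ≠ F (i+1).val
    by_cases h : i.val + 1 < k + 2
    · have hv : (i+1).val = i.val + 1 := by
        rw [fin_add_one_val]; exact Nat.mod_eq_of_lt h
      rw [hv]
      exact (hne i.val h).symm
    · have hival : i.val = k+1 := by have := i.isLt; omega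
      have hv0 : (i+1).val = 0 := by
        rw [fin_add_one_val, hival]; simp
      rw [hv0, hival]
      have hm := hmem (k+1) (by omega)
      have hF0 : F 0 = c := rfl
      rw [hF0]
      intro heq
      apply hlast
      rw [← heq]
      exact hm

lemma fin_last_eq_neg_one {k : ℕ} : Fin.last (k+1) = (-1 : Fin (k+2)) :=
  eq_neg_of_add_eq_zero_left (Fin.last_add_one (k+1))

lemma parity_ne {k : ℕ} (hke : k % 2 = 0) (i : Fin (k+2)) :
    i.val % 2 ≠ (i+1).val % 2 := by
  have h1 := fin_add_one_val i
  have h2 := i.isLt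
  by_cases h : i.val + 1 < k + 2
  · rw [Nat.mod_eq_of_lt h] at h1; omega
  · have : i.val = k + 1 := by omega
    rw [this] at h1
    have h3 : (k + 1 + 1) % (k + 2) = 0 := Nat.mod_self (k + 2)
    omega

lemma cycle_exists_coloring {k : ℕ} (hke : k % 2 = 0) (L : Fin (k+2) → Finset ℕ)
    (hL : ∀ i, 2 ≤ (L i).card) :
    ∃ f : Fin (k+2) → ℕ, (∀ i, f i ∈ L i) ∧ ∀ i, f i ≠ f (i+1) := by
  by_cases hall : ∀ i, L (i+1) = L i
  · -- all lists equal, use alternating coloring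
    have hall0 : ∀ i, L i = L 0 := by
      intro i
      have aux : ∀ t (h : t < k+2), L ⟨t, h⟩ = L 0 := by
        intro t
        induction t with
        | zero => intro h; rfl
        | succ s ih =>
          intro h
          have hs : s < k + 2 := by omega
          have hsucc : (⟨s, hs⟩ : Fin (k+2)) + 1 = ⟨s+1, h⟩ := by
            apply Fin.ext
            rw [fin_add_one_val]
            exact Nat.mod_eq_of_lt h
          rw [← hsucc, hall ⟨s, hs⟩, ih hs]
      have := aux i.val i.isLt
      rwa [Fin.eta] at this
    obtain ⟨x, hx, y, hy, hxy⟩ := Finset.one_lt_card.mp (hL 0)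
    refine ⟨fun i => if i.val % 2 = 0 then x else y, ?_, ?_⟩
    · intro i
      rw [hall0 i]
      show (if i.val % 2 = 0 then x else y) ∈ L 0
      split <;> assumption
    · intro i
      have := parity_ne hke i
      by_cases h : i.val % 2 = 0 <;> by_cases h' : (i+1).val % 2 = 0 <;>
        simp [h, h'] <;> omega
  · push_neg at hall
    obtain ⟨j, hj⟩ := hall
    have hdiff : ∃ c, (c ∈ L (j+1) ∧ c ∉ L j) ∨ (c ∈ L j ∧ c ∉ L (j+1)) := by
      by_contra hno
      push_neg at hno
      apply hj
      ext a
      exact ⟨(hno a).1, (hno a).2⟩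
    obtain ⟨c, hc | hc⟩ := hdiff
    · -- rotate by j+1
      set L' : Fin (k+2) → Finset ℕ := fun i => L (j + 1 + i) with hL'
      have h0 : L' 0 = L (j+1) := congrArg L (add_zero _)
      have hlst : L' (Fin.last (k+1)) = L j := congrArg L (by
        rw [fin_last_eq_neg_one]; (open Fin.CommRing in ring))
      obtain ⟨f', hmem', hne', -⟩ := exists_coloring_start L' (fun i => hL _) c
        (by rw [h0]; exact hc.1) (by rw [hlst]; exact hc.2)
      refine ⟨fun i => f' (i - (j+1)), ?_, ?_⟩
      · intro i
        have := hmem' (i - (j+1))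
        have heq : L' (i - (j+1)) = L i := congrArg L (by (open Fin.CommRing in ring))
        rwa [heq] at this
      · intro i
        have := hne' (i - (j+1))
        have heq : (i - (j+1)) + 1 = (i + 1) - (j+1) := by (open Fin.CommRing in ring)
        rwa [heq] at this
    · -- reflect around j
      set L' : Fin (k+2) → Finset ℕ := fun i => L (j - i) with hL'
      have h0 : L' 0 = L j := congrArg L (sub_zero _)
      have hlst : L' (Fin.last (k+1)) = L (j+1) := congrArg L (by
        rw [fin_last_eq_neg_one]; (open Fin.CommRing in ring))
      obtain ⟨f', hmem', hne', -⟩ := exists_coloring_start L' (fun i => hL _) c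
        (by rw [h0]; exact hc.1) (by rw [hlst]; exact hc.2)
      refine ⟨fun i => f' (j - i), ?_, ?_⟩
      · intro i
        have := hmem' (j - i)
        have heq : L' (j - i) = L i := congrArg L (by (open Fin.CommRing in ring))
        rwa [heq] at this
      · intro i
        have := hne' (j - (i+1))
        have heq : (j - (i+1)) + 1 = j - i := by (open Fin.CommRing in ring)
        rw [heq] at this
        exact this.symm

lemma fin_last_add_one {k : ℕ} : (Fin.last (k+1) : Fin (k+2)) + 1 = 0 := Fin.last_add_one (k+1)

lemma second_coloring_core {k : ℕ} (hke : k % 2 = 0)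
    (L : Fin (k+2) → Finset ℕ) (f o : Fin (k+2) → ℕ)
    (hfm : ∀ i, f i ∈ L i) (hfp : ∀ i, f i ≠ f (i+1))
    (hom : ∀ i, o i ∈ L i) (hof : ∀ i, o i ≠ f i)
    (hrot : o (Fin.last (k+1)) = o 0) :
    ∃ g : Fin (k+2) → ℕ, (∀ i, g i ∈ L i) ∧ (∀ i, g i ≠ g (i+1)) ∧ g ≠ f := by
  set last : Fin (k+2) := Fin.last (k+1) with hlastdef
  have hlastval : last.val = k + 1 := rfl
  have hlast1 : last + 1 = 0 := fin_last_add_one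
  have hSne : (Finset.univ.filter (fun i : Fin (k+2) => ¬(o i = f (i+1)))).Nonempty := by
    refine ⟨last, ?_⟩
    rw [Finset.mem_filter]
    refine ⟨Finset.mem_univ _, ?_⟩
    rw [hlast1, hrot]
    exact hof 0
  obtain ⟨k₀, hk₀mem, hk₀min⟩ := Finset.exists_min_image _ id hSne
  rw [Finset.mem_filter] at hk₀mem
  have hk₀ : ¬(o k₀ = f (k₀ + 1)) := hk₀mem.2
  have hmin : ∀ i, i < k₀ → o i = f (i+1) := by
    intro i hi
    by_contra hcon
    have hmem : i ∈ Finset.univ.filter (fun i : Fin (k+2) => ¬(o i = f (i+1))) := by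
      rw [Finset.mem_filter]; exact ⟨Finset.mem_univ _, hcon⟩
    exact absurd (hk₀min i hmem) (not_le.mpr hi)
  have hB0 : o 0 ≠ f last := by rw [← hrot]; exact hof last
  by_cases hcase : k₀ = last
  · -- all i < last satisfy o i = f (i+1); find a ≠ 0 with o a ≠ f (a-1)
    have hminl : ∀ i : Fin (k+2), i.val < k + 1 → o i = f (i+1) := by
      intro i hi
      exact hmin i (by rw [hcase]; exact hi)
    have habove : ∃ a : Fin (k+2), a ≠ 0 ∧ o a ≠ f (a - 1) := by
      by_contra hno
      push_neg at hno
      have hstep : ∀ t (h : t + 2 < k+2), f ⟨t, by omega⟩ = f ⟨t+2, h⟩ := by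
        intro t h
        set i : Fin (k+2) := ⟨t+1, by omega⟩ with hidef
        have hi0 : i ≠ 0 := by
          intro hc
          have : (t+1 : ℕ) = 0 := congrArg Fin.val hc
          omega
        have h1 : o i = f (i + 1) := hminl i (by simp [hidef]; omega)
        have h2 : o i = f (i - 1) := hno i hi0
        have hip : i + 1 = ⟨t+2, h⟩ := by
          apply Fin.ext
          rw [fin_add_one_val]
          simp [hidef]
          omega
        have him : i - 1 = ⟨t, by omega⟩ := by
          symm
          apply eq_sub_of_add_eq
          apply Fin.ext
          rw [fin_add_one_val]
          simp [hidef]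
          omega
        rw [hip] at h1; rw [him] at h2
        rw [← h2, h1]
      have heven : ∀ s (h : 2*s ≤ k), f ⟨2*s, by omega⟩ = f 0 := by
        intro s
        induction s with
        | zero => intro h; congr 1
        | succ r ih =>
          intro h
          have h1 : 2*r + 2 < k + 2 := by omega
          have h2 : (⟨2*(r+1), by omega⟩ : Fin (k+2)) = ⟨2*r+2, h1⟩ := by
            apply Fin.ext; simp; omega
          rw [h2, ← hstep (2*r) h1]
          exact ih (by omega)
      have hol : o last = f (last - 1) := by
        apply hno
        intro hc
        have : (k+1 : ℕ) = 0 := congrArg Fin.val hc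
        omega
      have hlm : last - 1 = (⟨k, by omega⟩ : Fin (k+2)) := by
        symm
        apply eq_sub_of_add_eq
        apply Fin.ext
        rw [fin_add_one_val]
        simp
        omega
      have hfk : f (⟨k, by omega⟩ : Fin (k+2)) = f 0 := by
        have h2k : 2 * (k/2) = k := by omega
        have := heven (k/2) (by omega)
        have he : (⟨2*(k/2), by omega⟩ : Fin (k+2)) = ⟨k, by omega⟩ := by
          apply Fin.ext; simp [h2k]
        rwa [he] at this
      have ho0 : o 0 = f (0 + 1) := hminl 0 (by simp)
      -- combine: o last = o 0, o last = f ⟨k⟩ = f 0, o 0 = f 1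
      have : f 0 = f (0 + 1) := by
        rw [← ho0, ← hrot, hol, hlm, hfk]
      exact hfp 0 this
    obtain ⟨a, ha0, hBa⟩ := habove
    refine ⟨fun i => if a ≤ i then o i else f i, ?_, ?_, ?_⟩
    · intro i; dsimp only; split <;> [exact hom i; exact hfm i]
    · intro i
      dsimp only
      by_cases hw : i.val + 1 < k + 2
      · have hv : (i+1).val = i.val + 1 := by
          rw [fin_add_one_val]; exact Nat.mod_eq_of_lt hw
        by_cases h1 : a ≤ i
        · have h1' : a ≤ i + 1 := by
            rw [Fin.le_def] at h1 ⊢; omega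
          rw [if_pos h1, if_pos h1']
          have : o i = f (i+1) := hminl i (by omega)
          rw [this]
          exact fun hcon => hof (i+1) hcon.symm
        · by_cases h2 : a ≤ i + 1
          · have ha : i + 1 = a := by
              rw [Fin.le_def] at h1 h2
              apply Fin.ext
              omega
            rw [if_neg h1, if_pos h2]
            have him : a - 1 = i := (eq_sub_of_add_eq ha).symm
            rw [ha]
            intro hcon
            exact hBa (by rw [him, ← hcon])
          · rw [if_neg h1, if_neg h2]
            exact hfp i
      · have hival : i.val = k + 1 := by have := i.isLt; omega
        have hil : i = last := Fin.ext (by rw [hival, hlastval])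
        have hi1 : i + 1 = 0 := by rw [hil]; exact hlast1
        have ha' : a ≤ i := by rw [hil]; exact Fin.le_last a
        have ha0' : ¬(a ≤ (0 : Fin (k+2))) := by
          intro hc
          exact ha0 (le_antisymm hc (Fin.zero_le a))
        rw [hi1, if_pos ha', if_neg ha0', hil, hrot]
        exact hof 0
    · intro hcon
      apply hof last
      have h1 : (fun i => if a ≤ i then o i else f i) last = o last := by
        show (if a ≤ last then o last else f last) = o last
        rw [if_pos (Fin.le_last a)]
      rw [← h1, hcon]
  · -- k₀ < last
    have hk₀lt : k₀.val < k + 1 := by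
      have := Fin.le_last k₀
      rw [Fin.le_def] at this
      rw [hlastval] at this
      rcases lt_or_eq_of_le this with h | h
      · exact h
      · exact absurd (Fin.ext (h.trans hlastval.symm)) hcase
    refine ⟨fun i => if i ≤ k₀ then o i else f i, ?_, ?_, ?_⟩
    · intro i; dsimp only; split <;> [exact hom i; exact hfm i]
    · intro i
      dsimp only
      by_cases hw : i.val + 1 < k + 2
      · have hv : (i+1).val = i.val + 1 := by
          rw [fin_add_one_val]; exact Nat.mod_eq_of_lt hw
        by_cases h1 : i + 1 ≤ k₀
        · have h1' : i ≤ k₀ := by rw [Fin.le_def] at h1 ⊢; omega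
          rw [if_pos h1', if_pos h1]
          have : o i = f (i+1) := hmin i (by rw [Fin.lt_def]; rw [Fin.le_def] at h1; omega)
          rw [this]
          exact fun hcon => hof (i+1) hcon.symm
        · by_cases h2 : i ≤ k₀
          · have ha : i = k₀ := by
              rw [Fin.le_def] at h1 h2
              apply Fin.ext
              omega
            rw [if_pos h2, if_neg h1, ha]
            exact hk₀
          · rw [if_neg h2, if_neg (fun hc => h2 (by rw [Fin.le_def] at hc ⊢; omega))]
            exact hfp i
      · have hival : i.val = k + 1 := by have := i.isLt; omega
        have hil : i = last := Fin.ext (by rw [hival, hlastval])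
        have hi1 : i + 1 = 0 := by rw [hil]; exact hlast1
        have hnl : ¬(i ≤ k₀) := by
          rw [Fin.le_def, hival]
          omega
        rw [hi1, if_neg hnl, if_pos (Fin.zero_le k₀), hil]
        exact fun hcon => hB0 hcon.symm
    · intro hcon
      apply hof 0
      have h1 : (fun i => if i ≤ k₀ then o i else f i) 0 = o 0 := by
        show (if (0:Fin (k+2)) ≤ k₀ then o 0 else f 0) = o 0
        rw [if_pos (Fin.zero_le k₀)]
      rw [← h1, hcon]

lemma cycle_second_coloring {k : ℕ} (hke : k % 2 = 0)
    (L : Fin (k+2) → Finset ℕ) (hL : ∀ i, 2 ≤ (L i).card)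
    (f : Fin (k+2) → ℕ) (hfm : ∀ i, f i ∈ L i) (hfp : ∀ i, f i ≠ f (i+1)) :
    ∃ g : Fin (k+2) → ℕ, (∀ i, g i ∈ L i) ∧ (∀ i, g i ≠ g (i+1)) ∧ g ≠ f := by
  set o : Fin (k+2) → ℕ := fun i => pick (L i) (f i) with ho
  have hom : ∀ i, o i ∈ L i := fun i => (pick_spec (hL i) (f i)).1
  have hof : ∀ i, o i ≠ f i := fun i => (pick_spec (hL i) (f i)).2
  by_cases hcase : ∀ i, o i ≠ o (i+1)
  · refine ⟨o, hom, hcase, ?_⟩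
    intro hcon
    exact hof 0 (congrFun hcon 0)
  · push_neg at hcase
    obtain ⟨j, hj⟩ := hcase
    -- rotate everything by j+1
    set L' : Fin (k+2) → Finset ℕ := fun i => L (j + 1 + i) with hL'
    set f' : Fin (k+2) → ℕ := fun i => f (j + 1 + i) with hf'
    set o' : Fin (k+2) → ℕ := fun i => o (j + 1 + i) with ho'
    have hshift : ∀ i : Fin (k+2), j + 1 + (i + 1) = (j + 1 + i) + 1 := by intro i; (open Fin.CommRing in ring)
    have hfm' : ∀ i, f' i ∈ L' i := fun i => hfm _
    have hfp' : ∀ i, f' i ≠ f' (i+1) := by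
      intro i
      show f (j+1+i) ≠ f (j+1+(i+1))
      rw [hshift i]
      exact hfp _
    have hom' : ∀ i, o' i ∈ L' i := fun i => hom _
    have hof' : ∀ i, o' i ≠ f' i := fun i => hof _
    have hrot' : o' (Fin.last (k+1)) = o' 0 := by
      show o (j + 1 + Fin.last (k+1)) = o (j + 1 + 0)
      have e1 : j + 1 + Fin.last (k+1) = j := by
        rw [add_assoc, add_comm 1 (Fin.last (k+1)), fin_last_add_one, add_zero]
      have e2 : j + 1 + (0 : Fin (k+2)) = j + 1 := add_zero _
      rw [e1, e2]
      exact hj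
    obtain ⟨g', hgm', hgp', hgne'⟩ := second_coloring_core hke L' f' o' hfm' hfp' hom' hof' hrot'
    refine ⟨fun i => g' (i - (j+1)), ?_, ?_, ?_⟩
    · intro i
      have := hgm' (i - (j+1))
      have heq : L' (i - (j+1)) = L i := congrArg L (by (open Fin.CommRing in ring))
      rwa [heq] at this
    · intro i
      have := hgp' (i - (j+1))
      have heq : (i - (j+1)) + 1 = (i + 1) - (j+1) := by (open Fin.CommRing in ring)
      rwa [heq] at this
    · intro hcon
      apply hgne'
      funext t
      have : (fun i => g' (i - (j+1))) (j + 1 + t) = f (j + 1 + t) := by rw [hcon]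
      have e : j + 1 + t - (j + 1) = t := by (open Fin.CommRing in ring)
      rw [show (fun i => g' (i - (j+1))) (j + 1 + t) = g' (j + 1 + t - (j+1)) from rfl, e] at this
      exact this



lemma isProper_cycle_iff {k : ℕ} {L : Fin (k+2) → Finset ℕ} {f : Fin (k+2) → ℕ} :
    IsProperListColoring (cycleGraph (k+2)) L f ↔
      (∀ i, f i ∈ L i) ∧ ∀ i, f i ≠ f (i+1) := by
  constructor
  · exact fun h => ⟨h.1, fun i => h.2 (cycle_adj_succ i)⟩
  · exact fun h => ⟨h.1, proper_of_succ h.2⟩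

lemma finite_colorings {V : Type*} [Fintype V] (G : SimpleGraph V) (L : V → Finset ℕ) :
    Finite {f : V → ℕ // IsProperListColoring G L f} := by
  apply Finite.of_injective (β := ∀ v : V, {x // x ∈ L v})
    (f := fun p => fun v => ⟨p.1 v, p.2.1 v⟩)
  intro p q h
  apply Subtype.ext
  funext v
  exact congrArg Subtype.val (congrFun h v)

def altc (c : ℕ) {k : ℕ} : Fin (k+2) → ℕ := fun i => (i.val + c) % 2

lemma altc_proper {k : ℕ} (hke : k % 2 = 0) (c : ℕ) (hc : c < 2) :
    IsProperListColoring (cycleGraph (k+2)) (fun _ => ({0,1} : Finset ℕ)) (altc c) := by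
  rw [isProper_cycle_iff]
  constructor
  · intro i
    have : (i.val + c) % 2 = 0 ∨ (i.val + c) % 2 = 1 := Nat.mod_two_eq_zero_or_one _
    rcases this with h | h <;> simp [altc, h]
  · intro i
    have := parity_ne hke i
    show (i.val + c) % 2 ≠ ((i+1).val + c) % 2
    omega

lemma altc_unique {k : ℕ} (f : Fin (k+2) → ℕ)
    (hf : IsProperListColoring (cycleGraph (k+2)) (fun _ => ({0,1} : Finset ℕ)) f) :
    f = altc 0 ∨ f = altc 1 := by
  rw [isProper_cycle_iff] at hf
  obtain ⟨hm, hp⟩ := hf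
  have hmem : ∀ i, f i = 0 ∨ f i = 1 := by
    intro i
    have := hm i
    simp [Finset.mem_insert, Finset.mem_singleton] at this
    tauto
  have key : ∀ (c : ℕ), f 0 = c % 2 → ∀ t (h : t < k+2), f ⟨t, h⟩ = (t + c) % 2 := by
    intro c hc t
    induction t with
    | zero =>
      intro h
      have h0 : (⟨0, h⟩ : Fin (k+2)) = 0 := Fin.ext (by simp)
      rw [h0, hc]
      omega
    | succ s ih =>
      intro h
      have hs : s < k+2 := by omega
      have hsucc : (⟨s, hs⟩ : Fin (k+2)) + 1 = ⟨s+1, h⟩ := by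
        apply Fin.ext
        rw [fin_add_one_val]
        exact Nat.mod_eq_of_lt h
      have hne := hp ⟨s, hs⟩
      rw [hsucc] at hne
      have h1 := hmem ⟨s+1, h⟩
      have h2 := hmem ⟨s, hs⟩
      have h3 := ih hs
      omega
  rcases hmem 0 with h0 | h0
  · left
    funext i
    have := key 0 (by omega) i.val i.isLt
    rw [Fin.eta] at this
    rw [this]; rfl
  · right
    funext i
    have := key 1 (by omega) i.val i.isLt
    rw [Fin.eta] at this
    rw [this]; rfl

lemma card_colorings_const01 {k : ℕ} (hke : k % 2 = 0) :
    Nat.card {f : Fin (k+2) → ℕ //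
      IsProperListColoring (cycleGraph (k+2)) (fun _ => ({0,1} : Finset ℕ)) f} = 2 := by
  rw [Nat.card_eq_two_iff]
  refine ⟨⟨altc 0, altc_proper hke 0 (by omega)⟩, ⟨altc 1, altc_proper hke 1 (by omega)⟩, ?_, ?_⟩
  · intro hcon
    have := congrFun (congrArg Subtype.val hcon) 0
    simp [altc] at this
  · apply Set.eq_univ_iff_forall.mpr
    intro z
    rcases altc_unique z.1 z.2 with h | h
    · left; exact Subtype.ext h
    · right; exact Subtype.ext h





section Prism
variable {k : ℕ}

lemma prism_choosable_three (hke : k % 2 = 0) :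
    Choosable (cycleGraph (k+2) □ completeBipartiteGraph (Fin 1) (Fin 1)) 3 := by
  intro L hL
  obtain ⟨fA, hA1, hA2⟩ := cycle_exists_coloring (k := k) hke (fun i => L (i, Sum.inl 0))
    (fun i => by rw [hL]; omega)
  obtain ⟨fB, hB1, hB2⟩ := cycle_exists_coloring (k := k) hke
    (fun i => (L (i, Sum.inr 0)).erase (fA i))
    (fun i => by
      have h1 := Finset.pred_card_le_card_erase (s := L (i, Sum.inr 0)) (a := fA i)
      have h2 := hL (i, Sum.inr 0)
      show 2 ≤ ((L (i, Sum.inr 0)).erase (fA i)).card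
      omega)
  refine ⟨fun p => Sum.elim (fun _ => fA p.1) (fun _ => fB p.1) p.2, ?_, ?_⟩
  · rintro ⟨i, z | z⟩
    · have hz : z = 0 := Subsingleton.elim _ _
      subst hz
      exact hA1 i
    · have hz : z = 0 := Subsingleton.elim _ _
      subst hz
      exact Finset.mem_of_mem_erase (hB1 i)
  · rintro ⟨i, z⟩ ⟨i', z'⟩ hadj
    rcases boxProd_adj.mp hadj with ⟨hG, hz⟩ | ⟨hH, hi⟩
    · simp only at hz
      subst hz
      cases z with
      | inl x => exact proper_of_succ hA2 hG
      | inr x => exact proper_of_succ hB2 hG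
    · simp only at hi
      subst hi
      cases z with
      | inl x =>
        cases z' with
        | inl y => simp [completeBipartiteGraph] at hH
        | inr y =>
          simp only [Sum.elim_inl, Sum.elim_inr]
          intro hcon
          exact (Finset.ne_of_mem_erase (hB1 i)) hcon.symm
      | inr x =>
        cases z' with
        | inl y =>
          simp only [Sum.elim_inl, Sum.elim_inr]
          exact Finset.ne_of_mem_erase (hB1 i)
        | inr y => simp [completeBipartiteGraph] at hH

/-- the bad 2-assignment on the B-cycle -/
def LB (k : ℕ) : Fin (k+2) → Finset ℕ := fun i =>
  if i.val = 0 then {0,2} else if i.val = 1 then {1,2}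
  else if i.val = 2 then {1,2} else if i.val = 3 then {0,2} else {0,1}

lemma LB_card (i : Fin (k+2)) : (LB k i).card = 2 := by
  unfold LB
  split
  · decide
  · split
    · decide
    · split
      · decide
      · split <;> decide

lemma prism_not_choosable_two (hk2 : 2 ≤ k) :
    ¬ Choosable (cycleGraph (k+2) □ completeBipartiteGraph (Fin 1) (Fin 1)) 2 := by
  intro hch
  obtain ⟨f, hmem, hprop⟩ := hch
    (fun p => Sum.elim (fun _ => ({0,1} : Finset ℕ)) (fun _ => LB k p.1) p.2)
    (by
      rintro ⟨i, z | z⟩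
      · exact (by decide : ({0,1} : Finset ℕ).card = 2)
      · exact LB_card i)
  set a : Fin (k+2) → ℕ := fun i => f (i, Sum.inl 0) with ha
  set b : Fin (k+2) → ℕ := fun i => f (i, Sum.inr 0) with hb
  have haa : ∀ i, a i ≠ a (i+1) :=
    fun i => hprop (Or.inl ⟨cycle_adj_succ i, rfl⟩)
  have hbb : ∀ i, b i ≠ b (i+1) :=
    fun i => hprop (Or.inl ⟨cycle_adj_succ i, rfl⟩)
  have hab : ∀ i, a i ≠ b i :=
    fun i => hprop (Or.inr ⟨by simp [completeBipartiteGraph], rfl⟩)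
  have ham : ∀ i, a i = 0 ∨ a i = 1 := by
    intro i
    have := hmem (i, Sum.inl 0)
    simp only [Sum.elim_inl, Finset.mem_insert, Finset.mem_singleton] at this
    exact this
  have hbm : ∀ i, b i ∈ LB k i := fun i => hmem (i, Sum.inr 0)
  -- set up the four indices
  set i0 : Fin (k+2) := 0 with hi0
  set i1 : Fin (k+2) := i0 + 1 with hi1
  set i2 : Fin (k+2) := i1 + 1 with hi2
  set i3 : Fin (k+2) := i2 + 1 with hi3
  have v0 : i0.val = 0 := rfl
  have v1 : i1.val = 1 := by
    rw [hi1, fin_add_one_val, v0]; exact Nat.mod_eq_of_lt (by omega)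
  have v2 : i2.val = 2 := by
    rw [hi2, fin_add_one_val, v1]; exact Nat.mod_eq_of_lt (by omega)
  have v3 : i3.val = 3 := by
    rw [hi3, fin_add_one_val, v2]; exact Nat.mod_eq_of_lt (by omega)
  have lb0 : LB k i0 = {0,2} := by unfold LB; rw [v0]; norm_num
  have lb1 : LB k i1 = {1,2} := by unfold LB; rw [v1]; norm_num
  have lb2 : LB k i2 = {1,2} := by unfold LB; rw [v2]; norm_num
  have lb3 : LB k i3 = {0,2} := by unfold LB; rw [v3]; norm_num
  have hb0 := hbm i0; rw [lb0] at hb0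
  have hb1 := hbm i1; rw [lb1] at hb1
  have hb2 := hbm i2; rw [lb2] at hb2
  have hb3 := hbm i3; rw [lb3] at hb3
  simp only [Finset.mem_insert, Finset.mem_singleton] at hb0 hb1 hb2 hb3
  rcases ham i0 with h0 | h0
  · -- a0 = 0, a1 = 1, b0 = b1 = 2
    have h1 : a i1 = 1 := by
      have := haa i0
      rcases ham i1 with h | h
      · rw [h0, h] at this; omega
      · exact h
    have hb0' : b i0 = 2 := by
      have := hab i0; rw [h0] at this; omega
    have hb1' : b i1 = 2 := by
      have := hab i1; rw [h1] at this; omega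
    exact hbb i0 (hb0'.trans hb1'.symm)
  · -- a0 = 1, a1 = 0, a2 = 1, a3 = 0, b2 = b3 = 2
    have h1 : a i1 = 0 := by
      have := haa i0
      rcases ham i1 with h | h
      · exact h
      · rw [h0, h] at this; omega
    have h2 : a i2 = 1 := by
      have := haa i1
      rcases ham i2 with h | h
      · rw [h1, h] at this; omega
      · exact h
    have h3 : a i3 = 0 := by
      have := haa i2
      rcases ham i3 with h | h
      · exact h
      · rw [h2, h] at this; omega
    have hb2' : b i2 = 2 := by
      have := hab i2; rw [h2] at this; omega
    have hb3' : b i3 = 2 := by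
      have := hab i3; rw [h3] at this; omega
    exact hbb i2 (hb2'.trans hb3'.symm)

lemma prism_not_choosable_low (b : ℕ) (hb : b ≤ 1) :
    ¬ Choosable (cycleGraph (k+2) □ completeBipartiteGraph (Fin 1) (Fin 1)) b := by
  intro hch
  have hadj : (cycleGraph (k+2) □ completeBipartiteGraph (Fin 1) (Fin 1)).Adj
      (0, Sum.inl 0) (0+1, Sum.inl 0) := Or.inl ⟨cycle_adj_succ 0, rfl⟩
  interval_cases b
  · obtain ⟨f, hf⟩ := hch (fun _ => ∅) (fun _ => rfl)
    exact absurd (hf.1 (0, Sum.inl 0)) (Finset.notMem_empty _)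
  · obtain ⟨f, hf⟩ := hch (fun _ => {0}) (fun _ => rfl)
    have h0 := Finset.mem_singleton.mp (hf.1 (0, Sum.inl 0))
    have h1 := Finset.mem_singleton.mp (hf.1 (0+1, Sum.inl 0))
    exact hf.2 hadj (h0.trans h1.symm)

lemma prism_chromatic (hk2 : 2 ≤ k) (hke : k % 2 = 0) :
    listChromaticNumber (cycleGraph (k+2) □ completeBipartiteGraph (Fin 1) (Fin 1)) = 3 := by
  apply sInf_set_eq (prism_choosable_three hke)
  intro b hb
  by_contra hcon
  have hb2 : b ≤ 2 := by omega
  rcases Nat.lt_or_ge b 2 with h | h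
  · exact prism_not_choosable_low b (by omega) hb
  · have : b = 2 := by omega
    subst this
    exact prism_not_choosable_two hk2 hb

end Prism

section Degenerate
variable {k : ℕ}

lemma deg_choosable_two (hke : k % 2 = 0) :
    Choosable (cycleGraph (k+2) □ completeBipartiteGraph (Fin 1) (Fin 0)) 2 := by
  intro L hL
  obtain ⟨fA, hA1, hA2⟩ := cycle_exists_coloring (k := k) hke (fun i => L (i, Sum.inl 0))
    (fun i => (hL _).ge)
  refine ⟨fun p => fA p.1, ?_, ?_⟩
  · rintro ⟨i, z | z⟩
    · have hz : z = 0 := Subsingleton.elim _ _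
      subst hz
      exact hA1 i
    · exact z.elim0
  · rintro ⟨i, z⟩ ⟨i', z'⟩ hadj
    rcases boxProd_adj.mp hadj with ⟨hG, hz⟩ | ⟨hH, hi⟩
    · exact proper_of_succ hA2 hG
    · exfalso
      cases z with
      | inl x =>
        cases z' with
        | inl y => simp [completeBipartiteGraph] at hH
        | inr y => exact y.elim0
      | inr x => exact x.elim0

lemma deg_not_choosable_low (b : ℕ) (hb : b ≤ 1) :
    ¬ Choosable (cycleGraph (k+2) □ completeBipartiteGraph (Fin 1) (Fin 0)) b := by
  intro hch
  have hadj : (cycleGraph (k+2) □ completeBipartiteGraph (Fin 1) (Fin 0)).Adj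
      (0, Sum.inl 0) (0+1, Sum.inl 0) := Or.inl ⟨cycle_adj_succ 0, rfl⟩
  interval_cases b
  · obtain ⟨f, hf⟩ := hch (fun _ => ∅) (fun _ => rfl)
    exact absurd (hf.1 (0, Sum.inl 0)) (Finset.notMem_empty _)
  · obtain ⟨f, hf⟩ := hch (fun _ => {0}) (fun _ => rfl)
    have h0 := Finset.mem_singleton.mp (hf.1 (0, Sum.inl 0))
    have h1 := Finset.mem_singleton.mp (hf.1 (0+1, Sum.inl 0))
    exact hf.2 hadj (h0.trans h1.symm)

lemma deg_chromatic (hke : k % 2 = 0) :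
    listChromaticNumber (cycleGraph (k+2) □ completeBipartiteGraph (Fin 1) (Fin 0)) = 2 := by
  apply sInf_set_eq (deg_choosable_two hke)
  intro b hb
  by_contra hcon
  exact deg_not_choosable_low b (by omega) hb

end Degenerate


lemma cycle_choosable_two {k : ℕ} (hke : k % 2 = 0) : Choosable (cycleGraph (k+2)) 2 := by
  intro L hL
  obtain ⟨f, h1, h2⟩ := cycle_exists_coloring hke L (fun i => (hL i).ge)
  exact ⟨f, isProper_cycle_iff.mpr ⟨h1, h2⟩⟩

lemma cycle_not_choosable_low {k : ℕ} (b : ℕ) (hb : b ≤ 1) :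
    ¬ Choosable (cycleGraph (k+2)) b := by
  intro hch
  interval_cases b
  · obtain ⟨f, hf⟩ := hch (fun _ => ∅) (fun _ => rfl)
    exact absurd (hf.1 0) (Finset.notMem_empty _)
  · obtain ⟨f, hf⟩ := hch (fun _ => {0}) (fun _ => rfl)
    have h0 := Finset.mem_singleton.mp (hf.1 0)
    have h1 := Finset.mem_singleton.mp (hf.1 (0+1))
    exact hf.2 (cycle_adj_succ 0) (h0.trans h1.symm)

lemma cycle_chromatic {k : ℕ} (hke : k % 2 = 0) :
    listChromaticNumber (cycleGraph (k+2)) = 2 := by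
  apply sInf_set_eq (cycle_choosable_two hke)
  intro b hb
  by_contra hcon
  exact cycle_not_choosable_low b (by omega) hb

lemma cycle_listColorFunction {k : ℕ} (hke : k % 2 = 0) :
    listColorFunction (cycleGraph (k+2)) 2 = 2 := by
  apply sInf_set_eq
  · exact ⟨fun _ => ({0,1} : Finset ℕ), fun _ => (by decide : ({0,1} : Finset ℕ).card = 2),
      (card_colorings_const01 hke).symm⟩
  · rintro b ⟨L, hL, rfl⟩
    have hfin := finite_colorings (cycleGraph (k+2)) L
    obtain ⟨f, hf1, hf2⟩ := cycle_exists_coloring hke L (fun i => (hL i).ge)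
    obtain ⟨g, hg1, hg2, hgf⟩ := cycle_second_coloring hke L (fun i => (hL i).ge) f hf1 hf2
    have := Fintype.ofFinite {h : Fin (k+2) → ℕ // IsProperListColoring (cycleGraph (k+2)) L h}
    rw [Nat.card_eq_fintype_card]
    apply Fintype.one_lt_card_iff_nontrivial.mpr
    refine ⟨⟨g, isProper_cycle_iff.mpr ⟨hg1, hg2⟩⟩, ⟨f, isProper_cycle_iff.mpr ⟨hf1, hf2⟩⟩, ?_⟩
    intro hc
    exact hgf (congrArg Subtype.val hc)

theorem evenCycle_f_one_eq_one (n : ℕ) (hn : 2 ≤ n) :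
    IsLeast {b : ℕ | listChromaticNumber
        (cycleGraph (2 * n) □ completeBipartiteGraph (Fin 1) (Fin b)) =
        listChromaticNumber (cycleGraph (2 * n)) + 1} 1 ∧
    listColorFunction (cycleGraph (2 * n)) 2 = 2 := by
  obtain ⟨k, hk⟩ : ∃ k, 2 * n = k + 2 := ⟨2 * n - 2, by omega⟩
  have hke : k % 2 = 0 := by omega
  have hk2 : 2 ≤ k := by omega
  rw [hk]
  refine ⟨⟨?_, ?_⟩, cycle_listColorFunction hke⟩
  · show listChromaticNumber (cycleGraph (k+2) □ completeBipartiteGraph (Fin 1) (Fin 1)) =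
      listChromaticNumber (cycleGraph (k+2)) + 1
    rw [prism_chromatic hk2 hke, cycle_chromatic hke]
  · intro b hb
    by_contra hcon
    have hb0 : b = 0 := by omega
    subst hb0
    have hb' : listChromaticNumber
        (cycleGraph (k+2) □ completeBipartiteGraph (Fin 1) (Fin 0)) =
        listChromaticNumber (cycleGraph (k+2)) + 1 := hb
    rw [deg_chromatic hke, cycle_chromatic hke] at hb'
    omega
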